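/- Consider an N-player aggregative game (N ≥ 2) in which all strategy sets K_i ⊆ ℝ^n and each cost function has the form f_i(x_i, x_{-i}) = f̃_i(x_i, g_i(x̄)) where x̄ = Σ_{j=1}^N x_j and g_i is some mapping on the Minkowski sum K̄ = Σ_i K_i. Suppose the game is not abnormal, i.e., for every player i there is no function C_i of x_{-i} alone with f_i(x_i, x_{-i}) = C_i(x_{-i}) for all x_i ∈ K_i and all x_{-i} ∈ K_{-i}. If 0 ∈ K, then the function y ↦ h_P(0, y) is not identically zero on K; that is, there exists y ∈ K with h_P(0, y) ≠ 0. -/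
import Mathlib


noncomputable section

/-- The set of joint strategy profiles of a game with strategy sets `K i ⊆ ℝ^{n i}`. -/
def jointK {N : ℕ} {n : Fin N → ℕ}
    (K : ∀ i, Set (EuclideanSpace ℝ (Fin (n i)))) :
    Set (∀ i, EuclideanSpace ℝ (Fin (n i))) :=
  {x | ∀ i, x i ∈ K i}

/-- `φ` is an exact potential function for the game with strategy sets `K` and costs `f`. -/
def IsPotential {N : ℕ} {n : Fin N → ℕ}
    (K : ∀ i, Set (EuclideanSpace ℝ (Fin (n i))))
    (f : Fin N → (∀ i, EuclideanSpace ℝ (Fin (n i))) → ℝ)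
    (φ : (∀ i, EuclideanSpace ℝ (Fin (n i))) → ℝ) : Prop :=
  ∀ i : Fin N, ∀ x ∈ jointK K, ∀ xi' ∈ K i,
    f i (Function.update x i xi') - f i x = φ (Function.update x i xi') - φ x

/-- The game is a potential game. -/
def IsPotentialGame {N : ℕ} {n : Fin N → ℕ}
    (K : ∀ i, Set (EuclideanSpace ℝ (Fin (n i))))
    (f : Fin N → (∀ i, EuclideanSpace ℝ (Fin (n i))) → ℝ) : Prop :=
  ∃ φ, IsPotential K f φ

/-- The point on the path from `z` to `z + y` whose first `m` blocks are `z j + y j`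
and whose remaining blocks are `z j`. -/
def upTo {N : ℕ} {n : Fin N → ℕ}
    (z y : ∀ i, EuclideanSpace ℝ (Fin (n i))) (m : ℕ) :
    ∀ i, EuclideanSpace ℝ (Fin (n i)) :=
  fun j => if (j : ℕ) < m then z j + y j else z j

/-- `hP f z y` : the sum of the players' incremental cost differences along the path
`z → (z₁+y₁, z₋₁) → (z₁+y₁, z₂+y₂, …) → ⋯ → z+y`. -/
def hP {N : ℕ} {n : Fin N → ℕ}
    (f : Fin N → (∀ i, EuclideanSpace ℝ (Fin (n i))) → ℝ)
    (z y : ∀ i, EuclideanSpace ℝ (Fin (n i))) : ℝ :=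
  ∑ i : Fin N, (f i (upTo z y ((i : ℕ) + 1)) - f i (upTo z y (i : ℕ)))

/-- In an aggregative game (`N ≥ 2`, common strategy dimension `n`,
`f i x = f̃ i (x i) (g i (∑ j, x j))`) that is not abnormal (no player's cost is
independent of its own action on `K`), if `0 ∈ K` then `y ↦ h_P(0,y)` is not
identically zero on `K`. -/
theorem stmt4 {N : ℕ} {nDim : ℕ} (hN : 2 ≤ N)
    (K : Fin N → Set (EuclideanSpace ℝ (Fin nDim)))
    (f : Fin N → ((Fin N → EuclideanSpace ℝ (Fin nDim))) → ℝ)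
    (m : Fin N → ℕ)
    (g : ∀ i : Fin N, EuclideanSpace ℝ (Fin nDim) → EuclideanSpace ℝ (Fin (m i)))
    (ft : ∀ i : Fin N, EuclideanSpace ℝ (Fin nDim) → EuclideanSpace ℝ (Fin (m i)) → ℝ)
    (hagg : ∀ (i : Fin N) (x : Fin N → EuclideanSpace ℝ (Fin nDim)),
      f i x = ft i (x i) (g i (∑ j, x j)))
    (h0 : (0 : Fin N → EuclideanSpace ℝ (Fin nDim)) ∈ jointK (n := fun _ => nDim) K)
    (hnab : ∀ i : Fin N,
      ¬ (∀ x ∈ jointK (n := fun _ => nDim) K, ∀ xi' ∈ K i,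
          f i (Function.update x i xi') = f i x)) :
    ∃ y ∈ jointK (n := fun _ => nDim) K, hP (n := fun _ => nDim) f 0 y ≠ 0 := by
  by_contra hcon
  push_neg at hcon
  have hNpos : 0 < N := by omega
  set i : Fin N := ⟨N - 1, by omega⟩ with hi
  apply hnab i
  have key : ∀ y ∈ jointK (n := fun _ => nDim) K,
      f i y = f i (Function.update y i 0) := by
    intro y hy
    set y' := Function.update y i 0 with hy'def
    have hy'mem : y' ∈ jointK (n := fun _ => nDim) K := by
      intro j
      by_cases hj : j = i
      · subst hj; simpa [hy'def] using h0 i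
      · simpa [hy'def, Function.update_of_ne hj] using hy j
    have h1 := hcon y hy
    have h2 := hcon y' hy'mem
    have hupTo : ∀ m' : ℕ, m' ≤ N - 1 →
        upTo (n := fun _ => nDim) 0 y m' = upTo (n := fun _ => nDim) 0 y' m' := by
      intro m' hm'
      funext j
      unfold upTo
      by_cases hjm : (j : ℕ) < m'
      · have hji : j ≠ i := by
          intro h
          rw [h] at hjm
          simp only [hi] at hjm
          omega
        simp [hjm, hy'def, Function.update_of_ne hji]
      · simp [hjm]
    have hfull : ∀ w : Fin N → EuclideanSpace ℝ (Fin nDim),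
        upTo (n := fun _ => nDim) 0 w N = w := by
      intro w
      funext j
      simp [upTo, j.isLt]
    have hsum : (∑ k : Fin N,
        ((f k (upTo (n := fun _ => nDim) 0 y ((k : ℕ) + 1)) -
          f k (upTo (n := fun _ => nDim) 0 y (k : ℕ))) -
         (f k (upTo (n := fun _ => nDim) 0 y' ((k : ℕ) + 1)) -
          f k (upTo (n := fun _ => nDim) 0 y' (k : ℕ))))) = 0 := by
      rw [Finset.sum_sub_distrib]
      have := h1
      have := h2
      unfold hP at h1 h2
      rw [h1, h2]; ring
    have hsingle : (∑ k : Fin N,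
        ((f k (upTo (n := fun _ => nDim) 0 y ((k : ℕ) + 1)) -
          f k (upTo (n := fun _ => nDim) 0 y (k : ℕ))) -
         (f k (upTo (n := fun _ => nDim) 0 y' ((k : ℕ) + 1)) -
          f k (upTo (n := fun _ => nDim) 0 y' (k : ℕ))))) =
        ((f i (upTo (n := fun _ => nDim) 0 y ((i : ℕ) + 1)) -
          f i (upTo (n := fun _ => nDim) 0 y (i : ℕ))) -
         (f i (upTo (n := fun _ => nDim) 0 y' ((i : ℕ) + 1)) -
          f i (upTo (n := fun _ => nDim) 0 y' (i : ℕ)))) := by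
      apply Finset.sum_eq_single
      · intro k _ hk
        have hklt : (k : ℕ) < N - 1 := by
          have := k.isLt
          have : (k : ℕ) ≠ N - 1 := by
            intro h
            apply hk
            apply Fin.ext
            simp [hi, h]
          omega
        rw [hupTo ((k : ℕ) + 1) (by omega), hupTo (k : ℕ) (by omega)]
        ring
      · intro h
        exact absurd (Finset.mem_univ i) h
    rw [hsingle] at hsum
    have hiN : (i : ℕ) + 1 = N := by simp [hi]; omega
    rw [hiN, hfull y, hfull y'] at hsum
    have hmid : upTo (n := fun _ => nDim) 0 y (i : ℕ) =
        upTo (n := fun _ => nDim) 0 y' (i : ℕ) := hupTo (i : ℕ) (by simp [hi])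
    rw [hmid] at hsum
    linarith
  intro x hx xi' hxi'
  have hmem : Function.update x i xi' ∈ jointK (n := fun _ => nDim) K := by
    intro j
    by_cases hj : j = i
    · subst hj; simpa using hxi'
    · simpa [Function.update_of_ne hj] using hx j
  have h1 := key (Function.update x i xi') hmem
  have h2 := key x hx
  rw [Function.update_idem] at h1
  rw [h1, h2]
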